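/- Let θ > 0 be a real number, T a natural number, and I : Fin T → ℝ with I_t ≥ 0 for all t. Define u₀ = 0 and, for t = 1, …, T, s_t = ⌊(u_{t−1} + I_t)/θ⌋ and u_t = u_{t−1} + I_t − s_t·θ. Then Σ_{t=1}^T s_t = ⌊(Σ_{t=1}^T I_t)/θ⌋. -/

import Mathlib

/-- Division neuron decoding identity: an integrate-and-fire neuron with threshold
`θ > 0`, soft reset, and no leak, driven by nonnegative inputs, emits over `T`
timesteps a total spike count equal to `⌊(Σ I) / θ⌋`. -/
theorem division_neuron_decoding
    (θ : ℝ) (hθ : 0 < θ) (T : ℕ) (I : Fin T → ℝ) (hI : ∀ t, 0 ≤ I t)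
    (u : ℕ → ℝ) (s : ℕ → ℤ)
    (hu0 : u 0 = 0)
    (hs : ∀ t : Fin T, s ((t : ℕ) + 1) = ⌊(u (t : ℕ) + I t) / θ⌋)
    (hu : ∀ t : Fin T, u ((t : ℕ) + 1) = u (t : ℕ) + I t - (s ((t : ℕ) + 1) : ℝ) * θ) :
    (∑ t : Fin T, s ((t : ℕ) + 1)) = ⌊(∑ t, I t) / θ⌋ := by
  set I' : ℕ → ℝ := fun n => if h : n < T then I ⟨n, h⟩ else 0 with hI'
  have key : ∀ n, n ≤ T →
      u n = (∑ t ∈ Finset.range n, I' t) - ((∑ t ∈ Finset.range n, s (t + 1) : ℤ) : ℝ) * θ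
      ∧ 0 ≤ u n ∧ u n < θ := by
    intro n
    induction n with
    | zero => intro _; simp [hu0, hθ]
    | succ n ih =>
      intro hn
      have hnT : n < T := hn
      obtain ⟨h1, h2, h3⟩ := ih (le_of_lt hnT)
      set t : Fin T := ⟨n, hnT⟩
      have hst : s (n + 1) = ⌊(u n + I t) / θ⌋ := hs t
      have hut : u (n + 1) = u n + I t - (s (n + 1) : ℝ) * θ := hu t
      refine ⟨?_, ?_, ?_⟩
      · rw [hut, h1, Finset.sum_range_succ, Finset.sum_range_succ]
        have : I' n = I t := by simp [hI', hnT]; rfl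
        push_cast
        rw [this]; ring
      · rw [hut, hst]
        exact Int.sub_floor_div_mul_nonneg (u n + I t) hθ
      · rw [hut, hst]
        exact Int.sub_floor_div_mul_lt (u n + I t) hθ
  obtain ⟨h1, h2, h3⟩ := key T le_rfl
  have hsum : (∑ t : Fin T, s ((t : ℕ) + 1)) = ∑ t ∈ Finset.range T, s (t + 1) := by
    rw [Fin.sum_univ_eq_sum_range (fun n => s (n + 1))]
  have hIsum : (∑ t, I t) = ∑ t ∈ Finset.range T, I' t := by
    rw [← Fin.sum_univ_eq_sum_range (fun n => I' n) T]
    apply Finset.sum_congr rfl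
    intro i _
    simp [hI', i.isLt]
  rw [hsum, hIsum]
  set k := ∑ t ∈ Finset.range T, s (t + 1)
  set S := ∑ t ∈ Finset.range T, I' t
  symm
  rw [Int.floor_eq_iff]
  have hS : S = u T + (k : ℝ) * θ := by rw [h1]; ring
  constructor
  · rw [le_div_iff₀ hθ, hS]; nlinarith
  · rw [div_lt_iff₀ hθ, hS]; push_cast; nlinarith
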